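/- Let p = 7/10 and for t ∈ [1/2, 7/10) define μ(t) = (t + 7/10)/2. Then the equation p·(1-t)·(1-μ(t)) = (1-p)·t·μ(t) has a unique solution t* in the open interval (1/2, 7/10), and this solution satisfies 0.57 < t* < 0.58. -/
import Mathlib


theorem stmt_12 (p : ℝ) (hp : p = 7/10)
    (μ : ℝ → ℝ) (hμ : ∀ t, μ t = (t + 7/10) / 2) :
    ∃ t : ℝ, t ∈ Set.Ioo (1/2 : ℝ) (7/10) ∧
      p * (1 - t) * (1 - μ t) = (1 - p) * t * μ t ∧
      0.57 < t ∧ t < 0.58 ∧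
      ∀ t' ∈ Set.Ioo (1/2 : ℝ) (7/10),
        p * (1 - t') * (1 - μ t') = (1 - p) * t' * μ t' → t' = t := by
  subst hp
  have hs : Real.sqrt 4641 ^ 2 = 4641 := Real.sq_sqrt (by norm_num)
  have hs1 : Real.sqrt 4641 < 68.2 := by
    rw [show (68.2:ℝ) = Real.sqrt (68.2^2) from (Real.sqrt_sq (by norm_num)).symm]
    exact Real.sqrt_lt_sqrt (by norm_num) (by norm_num)
  have hs2 : (67.8:ℝ) < Real.sqrt 4641 := by
    rw [show (67.8:ℝ) = Real.sqrt (67.8^2) from (Real.sqrt_sq (by norm_num)).symm]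
    exact Real.sqrt_lt_sqrt (by norm_num) (by norm_num)
  set t := (91 - Real.sqrt 4641) / 40 with ht
  have h57 : (0.57:ℝ) < t := by rw [ht]; nlinarith
  have h58 : t < 0.58 := by rw [ht]; nlinarith
  refine ⟨t, ⟨by linarith, by linarith⟩, ?_, h57, h58, ?_⟩
  · rw [hμ]; rw [ht]; nlinarith [hs]
  · intro t' ht' heq
    rw [hμ] at heq
    have key : 40 * t' ^ 2 - 182 * t' + 91 = 0 := by nlinarith [heq]
    have keyt : 40 * t ^ 2 - 182 * t + 91 = 0 := by rw [ht]; nlinarith [hs]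
    have : (t' - t) * (40 * (t' + t) - 182) = 0 := by nlinarith
    have hne : 40 * (t' + t) - 182 ≠ 0 := by
      have := ht'.2
      nlinarith
    rcases mul_eq_zero.mp this with h | h
    · linarith
    · exact absurd h hne
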